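/- Let g_c(z) = lim_{n→∞} (1/d_n)·log₊|f_n(z)| be the Green's function of the Fibonacci system. Then g_c(z) = 0 if and only if z ∈ K_c, i.e., if and only if the sequence (f_n(z)) is bounded. -/

import Mathlib

/-- Two-step induction principle. -/
lemma stmt9_two_step (P : ℕ → Prop) (h0 : P 0) (h1 : P 1)
    (h : ∀ n, P n → P (n + 1) → P (n + 2)) : ∀ n, P n := by
  have key : ∀ n, P n ∧ P (n + 1) := by
    intro n
    induction n with
    | zero => exact ⟨h0, h1⟩
    | succ k ih => exact ⟨ih.2, h k ih.1 ih.2⟩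
  exact fun n => (key n).1

/-- If no two consecutive terms are ≥ cc + 4, the sequence is bounded. -/
lemma stmt9_bounded_aux (a : ℕ → ℝ) (cc : ℝ) (hcc : 0 ≤ cc)
    (ha : ∀ n, 0 ≤ a n)
    (hub : ∀ n, a (n + 2) ≤ a (n + 1) * a n + cc)
    (hlb : ∀ n, a (n + 1) * a n ≤ a (n + 2) + cc)
    (hsmall : ∀ n, a n < cc + 4 ∨ a (n + 1) < cc + 4) :
    ∀ n, a n ≤ max (max (a 0) (a 1)) (3 * cc + 5) := by
  set C := max (max (a 0) (a 1)) (3 * cc + 5) with hC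
  have hC1 : 3 * cc + 5 ≤ C := le_max_right _ _
  intro n
  induction n using Nat.strong_induction_on with
  | _ n IH =>
    match n with
    | 0 => exact le_trans (le_max_left _ _) (le_max_left _ _)
    | 1 => exact le_trans (le_max_right _ _) (le_max_left _ _)
    | (k + 2) =>
      by_contra hcon
      push_neg at hcon
      have hbig : cc + 4 ≤ a (k + 2) := by linarith
      -- a (k+3) < cc + 4
      have hk3 : a (k + 3) < cc + 4 := by
        rcases hsmall (k + 2) with h | h
        · linarith
        · exact h
      -- a (k+2) * a (k+1) ≤ 2cc + 4
      have h1 : a (k + 2) * a (k + 1) ≤ 2 * cc + 4 := by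
        have := hlb (k + 1)
        linarith
      have h2 : a (k + 2) ≤ a (k + 1) * a k + cc := hub k
      have hak : a k ≤ C := IH k (by omega)
      have hpos2 : 0 ≤ a (k + 2) := ha _
      have hpos1 : 0 ≤ a (k + 1) := ha _
      have hpos0 : 0 ≤ a k := ha _
      -- multiply h2 by a (k+2)
      have key : a (k + 2) * (a (k + 2) - cc) ≤ (2 * cc + 4) * C := by
        have e1 : a (k + 2) * (a (k + 2) - cc) ≤ a (k + 2) * (a (k + 1) * a k) := by
          nlinarith
        have e2 : a (k + 2) * (a (k + 1) * a k) ≤ (2 * cc + 4) * a k := by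
          nlinarith
        nlinarith
      have hfin : C * (2 * cc + 5) < a (k + 2) * (a (k + 2) - cc) := by nlinarith
      nlinarith [hfin, key, hC1, hcc]

/-- If two consecutive terms are ≥ cc + 4, the sequence grows like 2^fib. -/
lemma stmt9_growth_aux (a : ℕ → ℝ) (cc : ℝ) (hcc : 0 ≤ cc)
    (hlb : ∀ n, a (n + 1) * a n ≤ a (n + 2) + cc)
    (N : ℕ) (hN : cc + 4 ≤ a N) (hN1 : cc + 4 ≤ a (N + 1)) :
    ∀ m, cc + 4 ≤ a (N + m) ∧ (2 : ℝ) ^ (Nat.fib (m + 1) + 1) ≤ a (N + m) := by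
  apply stmt9_two_step
  · refine ⟨by simpa using hN, ?_⟩
    have hf1 : Nat.fib (0 + 1) = 1 := by decide
    rw [Nat.add_zero, hf1]
    norm_num
    linarith
  · refine ⟨hN1, ?_⟩
    have hf2 : Nat.fib (1 + 1) = 1 := by decide
    rw [hf2]
    norm_num
    linarith
  · intro m ⟨hm1, hm2⟩ ⟨hm1', hm2'⟩
    have hrec : a (N + m + 1) * a (N + m) ≤ a (N + m + 2) + cc := hlb (N + m)
    have hx4 : (4 : ℝ) ≤ a (N + m) := by linarith
    have hy4 : (4 : ℝ) ≤ a (N + (m + 1)) := by linarith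
    have hxy : a (N + (m + 1)) * a (N + m) ≤ a (N + (m + 2)) + cc := hrec
    constructor
    · nlinarith
    · -- 2^(fib(m+3)+1) ≤ a (N+m+2)
      have hfib : Nat.fib (m + 2 + 1) = Nat.fib (m + 1 + 1) + Nat.fib (m + 1) := by
        rw [Nat.fib_add_two]; omega
      have he : Nat.fib (m + 2 + 1) + 1 + 1 =
          (Nat.fib (m + 1 + 1) + 1) + (Nat.fib (m + 1) + 1) := by
        rw [hfib]; ring
      have hpow : (2 : ℝ) ^ (Nat.fib (m + 2 + 1) + 1) * 2 =
          (2 : ℝ) ^ (Nat.fib (m + 1 + 1) + 1) * (2 : ℝ) ^ (Nat.fib (m + 1) + 1) := by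
        rw [← pow_succ, he, pow_add]
      have hppos : (0 : ℝ) < (2 : ℝ) ^ (Nat.fib (m + 1) + 1) := by positivity
      have hmul : (2 : ℝ) ^ (Nat.fib (m + 1 + 1) + 1) * (2 : ℝ) ^ (Nat.fib (m + 1) + 1)
          ≤ a (N + (m + 1)) * a (N + m) := by
        apply mul_le_mul hm2' hm2 (le_of_lt hppos) (by linarith)
      -- a(N+m+2) ≥ xy - cc ≥ xy/2
      have half : a (N + (m + 1)) * a (N + m) / 2 ≤ a (N + (m + 2)) := by
        nlinarith
      nlinarith

theorem stmt9 (f : Polynomial ℂ) (hf : 0 < f.degree) (c : ℂ)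
    (fs : ℕ → ℂ → ℂ)
    (h0 : ∀ z, fs 0 z = z) (h1 : ∀ z, fs 1 z = f.eval z)
    (hrec : ∀ n z, fs (n + 2) z = fs (n + 1) z * fs n z + c)
    (d : ℕ → ℕ) (hd0 : d 0 = 1) (hd1 : d 1 = f.natDegree)
    (hdrec : ∀ n, d (n + 2) = d (n + 1) + d n)
    (g : ℂ → ℝ)
    (hg : ∀ z, Filter.Tendsto
      (fun n : ℕ => (1 / (d n : ℝ)) * max (Real.log (‖fs n z‖)) 0)
      Filter.atTop (nhds (g z))) :
    ∀ z : ℂ, g z = 0 ↔ BddAbove (Set.range fun n => ‖fs n z‖) := by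
  -- basic facts about d
  have hdeg1 : 1 ≤ f.natDegree := Polynomial.natDegree_pos_iff_degree_pos.mpr hf
  have hdge : ∀ n, max n 1 ≤ d n := by
    apply stmt9_two_step
    · simp [hd0]
    · simp [hd1]; omega
    · intro n hn hn1
      rw [hdrec n]
      simp only [max_le_iff] at *
      omega
  have hdpos : ∀ n, 0 < d n := fun n => lt_of_lt_of_le (by omega) (le_trans (le_max_right _ _) (hdge n))
  intro z
  set a : ℕ → ℝ := fun n => ‖fs n z‖ with hadef
  have ha : ∀ n, 0 ≤ a n := fun n => norm_nonneg _
  set cc : ℝ := ‖c‖ with hccdef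
  have hcc : 0 ≤ cc := norm_nonneg _
  have hub : ∀ n, a (n + 2) ≤ a (n + 1) * a n + cc := by
    intro n
    simp only [hadef]
    rw [hrec n z]
    calc ‖fs (n + 1) z * fs n z + c‖
        ≤ ‖fs (n + 1) z * fs n z‖ + ‖c‖ := norm_add_le _ _
      _ = ‖fs (n + 1) z‖ * ‖fs n z‖ + ‖c‖ := by
          rw [norm_mul]
  have hlb : ∀ n, a (n + 1) * a n ≤ a (n + 2) + cc := by
    intro n
    simp only [hadef]
    have e : fs (n + 1) z * fs n z = fs (n + 2) z + (-c) := by rw [hrec n z]; ring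
    calc ‖fs (n + 1) z‖ * ‖fs n z‖
        = ‖fs (n + 1) z * fs n z‖ := (norm_mul _ _).symm
      _ = ‖fs (n + 2) z + (-c)‖ := by rw [e]
      _ ≤ ‖fs (n + 2) z‖ + ‖-c‖ := norm_add_le _ _
      _ = ‖fs (n + 2) z‖ + ‖c‖ := by rw [norm_neg]
  constructor
  · -- g z = 0 → bounded
    intro hgz
    by_contra hnb
    -- there must exist two consecutive large terms
    have htwo : ∃ N, cc + 4 ≤ a N ∧ cc + 4 ≤ a (N + 1) := by
      by_contra hnot
      push_neg at hnot
      have hsmall : ∀ n, a n < cc + 4 ∨ a (n + 1) < cc + 4 := by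
        intro n
        rcases lt_or_ge (a n) (cc + 4) with h | h
        · exact Or.inl h
        · exact Or.inr (hnot n h)
      have hbd := stmt9_bounded_aux a cc hcc ha hub hlb hsmall
      exact hnb ⟨max (max (a 0) (a 1)) (3 * cc + 5), by
        rintro x ⟨n, rfl⟩
        exact hbd n⟩
    obtain ⟨N, hN, hN1⟩ := htwo
    have hgrow := stmt9_growth_aux a cc hcc hlb N hN hN1
    -- d bound: d (N+m) ≤ d (N+2) * fib (m+1)
    have hdbd : ∀ m, d (N + m) ≤ d (N + 2) * Nat.fib (m + 1) := by
      apply stmt9_two_step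
      · have hf1 : Nat.fib (0 + 1) = 1 := by decide
        rw [Nat.add_zero, hf1, Nat.mul_one, hdrec N]
        omega
      · have hf2 : Nat.fib (1 + 1) = 1 := by decide
        rw [hf2, Nat.mul_one, hdrec N]
        omega
      · intro m hm hm1
        have hstep : d (N + (m + 2)) = d (N + (m + 1)) + d (N + m) := hdrec (N + m)
        rw [hstep]
        have hfib : Nat.fib (m + 2 + 1) = Nat.fib (m + 1 + 1) + Nat.fib (m + 1) := by
          rw [Nat.fib_add_two]; omega
        rw [hfib, Nat.mul_add]
        omega
    -- lower bound for the terms of the sequence, eventually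
    have hev : ∀ n ≥ N, Real.log 2 / (d (N + 2) : ℝ) ≤
        (1 / (d n : ℝ)) * max (Real.log (‖fs n z‖)) 0 := by
      intro n hn
      obtain ⟨m, rfl⟩ := Nat.exists_eq_add_of_le hn
      have h2 := (hgrow m).2
      have hfibpos : 0 < Nat.fib (m + 1) := Nat.fib_pos.mpr (by omega)
      have hlog : (Nat.fib (m + 1) : ℝ) * Real.log 2 ≤
          max (Real.log (‖fs (N + m) z‖)) 0 := by
        have hb : Real.log ((2 : ℝ) ^ (Nat.fib (m + 1) + 1)) ≤ Real.log (a (N + m)) :=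
          Real.log_le_log (by positivity) h2
        rw [Real.log_pow] at hb
        have hl2 : 0 < Real.log 2 := Real.log_pos (by norm_num)
        have : (Nat.fib (m + 1) : ℝ) * Real.log 2 ≤
            ((Nat.fib (m + 1) + 1 : ℕ) : ℝ) * Real.log 2 := by
          have : (Nat.fib (m + 1) : ℝ) ≤ ((Nat.fib (m + 1) + 1 : ℕ) : ℝ) := by
            push_cast; linarith
          nlinarith
        exact le_trans (le_trans this hb) (le_max_left _ _)
      have hdn : (d (N + m) : ℝ) ≤ (d (N + 2) : ℝ) * (Nat.fib (m + 1) : ℝ) := by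
        exact_mod_cast hdbd m
      have hdnpos : (0 : ℝ) < (d (N + m) : ℝ) := by exact_mod_cast hdpos (N + m)
      have hfibne : (Nat.fib (m + 1) : ℝ) ≠ 0 := by exact_mod_cast hfibpos.ne'
      have heq : (Nat.fib (m + 1) : ℝ) * Real.log 2 /
          ((d (N + 2) : ℝ) * (Nat.fib (m + 1) : ℝ)) = Real.log 2 / (d (N + 2) : ℝ) := by
        rw [mul_comm ((d (N + 2) : ℝ)) ((Nat.fib (m + 1) : ℝ))]
        exact mul_div_mul_left _ _ hfibne
      rw [one_div_mul_eq_div, ← heq]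
      exact div_le_div₀ (le_max_right _ _) hlog hdnpos hdn
    have hge : Real.log 2 / (d (N + 2) : ℝ) ≤ g z := by
      apply ge_of_tendsto (hg z)
      filter_upwards [Filter.eventually_ge_atTop N] with n hn
      exact hev n hn
    have hposd : (0 : ℝ) < (d (N + 2) : ℝ) := by exact_mod_cast hdpos (N + 2)
    have hl2 : 0 < Real.log 2 := Real.log_pos (by norm_num)
    have : 0 < Real.log 2 / (d (N + 2) : ℝ) := div_pos hl2 hposd
    linarith [hgz ▸ hge]
  · -- bounded → g z = 0
    intro hb
    obtain ⟨M, hM⟩ := hb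
    have hMn : ∀ n, a n ≤ M := fun n => hM ⟨n, rfl⟩
    set M' : ℝ := max M 1 with hM'def
    have hM'1 : (1 : ℝ) ≤ M' := le_max_right _ _
    have hlogM' : 0 ≤ Real.log M' := Real.log_nonneg hM'1
    have hupper : ∀ n, (1 / (d n : ℝ)) * max (Real.log (‖fs n z‖)) 0 ≤
        Real.log M' / (d n : ℝ) := by
      intro n
      have hloga : max (Real.log (a n)) 0 ≤ Real.log M' := by
        apply max_le _ hlogM'
        rcases le_or_gt (a n) 1 with h | h
        · exact le_trans (Real.log_nonpos (ha n) h) hlogM'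
        · exact Real.log_le_log (by linarith) (le_trans (hMn n) (le_max_left _ _))
      rw [one_div_mul_eq_div]
      apply div_le_div₀ hlogM' hloga _ (le_refl _)
      exact_mod_cast hdpos n
    have hlower : ∀ n, 0 ≤ (1 / (d n : ℝ)) * max (Real.log (‖fs n z‖)) 0 := by
      intro n
      apply mul_nonneg (by positivity) (le_max_right _ _)
    have hdto : Filter.Tendsto (fun n : ℕ => (d n : ℝ)) Filter.atTop Filter.atTop := by
      apply tendsto_natCast_atTop_atTop.comp
      apply Filter.tendsto_atTop_mono _ Filter.tendsto_id
      intro n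
      exact le_trans (le_max_left n 1) (hdge n)
    have hto0 : Filter.Tendsto (fun n : ℕ => Real.log M' / (d n : ℝ))
        Filter.atTop (nhds 0) :=
      Filter.Tendsto.div_atTop tendsto_const_nhds hdto
    have := squeeze_zero hlower hupper hto0
    exact tendsto_nhds_unique (hg z) this
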